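/- For each u ∈ S¹, the closure in S³ of the fiber A_u = π₊⁻¹({u}) of the map π₊(z₁,z₂) = z₁z₂/|z₁z₂| equals A_u ∪ H, and this closure is homeomorphic to the closed annulus S¹ × [0,1] by a homeomorphism carrying A_u onto S¹ × (0,1) and H onto S¹ × {0,1}. Hence the pages of the open book of the positive Hopf link are open annuli whose closures are compact annuli with boundary the Hopf link H. -/

import Mathlib

noncomputable section

/-- The unit 3-sphere in ℂ². -/
def S3 : Set (ℂ × ℂ) := {p | ‖p.1‖ ^ 2 + ‖p.2‖ ^ 2 = 1}

/-- The unit circle in ℂ. -/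
def S1 : Set ℂ := {w | ‖w‖ = 1}

/-- The Hopf link `H = {(z₁,z₂) ∈ S³ : z₁z₂ = 0}`. -/
def hopfLink : Set (ℂ × ℂ) := {p ∈ S3 | p.1 * p.2 = 0}

/-- The fibration `π₊(z₁,z₂) = z₁z₂/|z₁z₂|` of the complement of the positive Hopf link. -/
def piPlus (p : ℂ × ℂ) : ℂ := p.1 * p.2 / ((‖p.1 * p.2‖ : ℝ) : ℂ)

/-- The page `A_u = π₊⁻¹({u})` of the open book of the positive Hopf link. -/
def pageA (u : ℂ) : Set (ℂ × ℂ) := {p | p ∈ S3 \ hopfLink ∧ piPlus p = u}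

namespace HopfAux

def pageF (u w : ℂ) (t : ℝ) : ℂ × ℂ :=
  ((Real.sqrt t : ℂ) * w, (Real.sqrt (1 - t) : ℂ) * u * (starRingEnd ℂ) w)

variable {u w : ℂ} {t : ℝ}

lemma sq_abs_one {x : ℝ} (hx0 : 0 ≤ x) (hx : x ^ 2 = 1) : x = 1 := by
  have h : (x - 1) * (x + 1) = 0 := by linear_combination hx
  rcases mul_eq_zero.1 h with h | h
  · linarith
  · linarith

lemma prod_eq (hw : ‖w‖ = 1) :
    (pageF u w t).1 * (pageF u w t).2
      = ((Real.sqrt t * Real.sqrt (1 - t) : ℝ) : ℂ) * u := by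
  have h1 : w * (starRingEnd ℂ) w = 1 := by
    rw [Complex.mul_conj, Complex.normSq_eq_norm_sq, hw]
    norm_num
  have h2 : (pageF u w t).1 * (pageF u w t).2
      = ((Real.sqrt t : ℂ) * (Real.sqrt (1-t) : ℂ)) * u * (w * (starRingEnd ℂ) w) := by
    simp only [pageF]; ring
  rw [h2, h1, mul_one]; push_cast; ring

lemma mem_S3 (hu : ‖u‖ = 1) (hw : ‖w‖ = 1) (ht : t ∈ Set.Icc (0:ℝ) 1) :
    pageF u w t ∈ S3 := by
  have h1 : ‖(pageF u w t).1‖ = Real.sqrt t := by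
    simp [pageF, map_mul, Complex.norm_real, hw, abs_of_nonneg (Real.sqrt_nonneg t)]
  have h2 : ‖(pageF u w t).2‖ = Real.sqrt (1 - t) := by
    simp [pageF, map_mul, Complex.norm_real, hw, hu,
      abs_of_nonneg (Real.sqrt_nonneg (1-t))]
  have e1 : Real.sqrt t ^ 2 = t := Real.sq_sqrt ht.1
  have e2 : Real.sqrt (1-t) ^ 2 = 1 - t := Real.sq_sqrt (by linarith [ht.2])
  simp only [S3, Set.mem_setOf_eq, h1, h2, e1, e2]
  ring

lemma mem_hopf_iff (hu : ‖u‖ = 1) (hw : ‖w‖ = 1)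
    (ht : t ∈ Set.Icc (0:ℝ) 1) :
    pageF u w t ∈ hopfLink ↔ t = 0 ∨ t = 1 := by
  have hS3 := mem_S3 hu hw ht
  have hune : u ≠ 0 := by
    intro h; rw [h] at hu; simp at hu
  constructor
  · rintro ⟨-, hz⟩
    rw [prod_eq hw] at hz
    rcases mul_eq_zero.1 hz with h | h
    · have : Real.sqrt t * Real.sqrt (1-t) = 0 := by exact_mod_cast h
      rcases mul_eq_zero.1 this with h' | h'
      · left; have := Real.sqrt_eq_zero'.1 h'; linarith [ht.1]
      · right; have := Real.sqrt_eq_zero'.1 h'; linarith [ht.2]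
    · exact absurd h hune
  · intro h
    refine ⟨hS3, ?_⟩
    rw [prod_eq hw]
    rcases h with h | h <;> subst h <;> simp

lemma mem_page_iff (hu : ‖u‖ = 1) (hw : ‖w‖ = 1)
    (ht : t ∈ Set.Icc (0:ℝ) 1) :
    pageF u w t ∈ pageA u ↔ t ∈ Set.Ioo (0:ℝ) 1 := by
  constructor
  · rintro ⟨⟨-, hnH⟩, -⟩
    rcases ht with ⟨ht0, ht1⟩
    constructor
    · rcases lt_or_eq_of_le ht0 with h | h
      · exact h
      · exact absurd ((mem_hopf_iff hu hw ⟨ht0, ht1⟩).2 (Or.inl h.symm)) hnH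
    · rcases lt_or_eq_of_le ht1 with h | h
      · exact h
      · exact absurd ((mem_hopf_iff hu hw ⟨ht0, ht1⟩).2 (Or.inr h)) hnH
  · rintro ⟨h0, h1⟩
    have hIcc : t ∈ Set.Icc (0:ℝ) 1 := ⟨h0.le, h1.le⟩
    have hc : 0 < Real.sqrt t * Real.sqrt (1 - t) :=
      mul_pos (Real.sqrt_pos.2 h0) (Real.sqrt_pos.2 (by linarith))
    refine ⟨⟨mem_S3 hu hw hIcc, ?_⟩, ?_⟩
    · intro hH
      rcases (mem_hopf_iff hu hw hIcc).1 hH with h | h <;> [exact absurd h h0.ne'; exact absurd h h1.ne]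
    · have hprod := prod_eq (u := u) (t := t) hw
      have habs : (‖(pageF u w t).1 * (pageF u w t).2‖ : ℝ)
          = Real.sqrt t * Real.sqrt (1-t) := by
        rw [hprod, norm_mul, Complex.norm_real, Real.norm_eq_abs, hu, mul_one, abs_of_pos hc]
      simp only [piPlus]
      rw [habs, hprod, mul_comm, mul_div_assoc, div_self (Complex.ofReal_ne_zero.2 hc.ne'), mul_one]

lemma surj (hu : ‖u‖ = 1) {p : ℂ × ℂ} (hp : p ∈ pageA u ∪ hopfLink) :
    ∃ w t, ‖w‖ = 1 ∧ t ∈ Set.Icc (0:ℝ) 1 ∧ pageF u w t = p := by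
  have hune : u ≠ 0 := by intro h; rw [h] at hu; simp at hu
  rcases hp with ⟨⟨hS3, hnH⟩, hpi⟩ | ⟨hS3, hz⟩
  · -- page case
    have hS3' : ‖p.1‖ ^ 2 + ‖p.2‖ ^ 2 = 1 := hS3
    have hne : p.1 * p.2 ≠ 0 := fun h => hnH ⟨hS3, h⟩
    have h1 : p.1 ≠ 0 := fun h => hne (by rw [h, zero_mul])
    have h2 : p.2 ≠ 0 := fun h => hne (by rw [h, mul_zero])
    set r := ‖p.1‖ with hr
    set s := ‖p.2‖ with hs
    have hr0 : 0 < r := norm_pos_iff.2 h1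
    have hs0 : 0 < s := norm_pos_iff.2 h2
    refine ⟨p.1 / (r:ℂ), r^2, ?_, ?_, ?_⟩
    · rw [norm_div, Complex.norm_real, Real.norm_eq_abs, abs_of_pos hr0, div_self hr0.ne']
    · constructor
      · positivity
      · nlinarith [sq_nonneg s]
    · have hsq : Real.sqrt (r^2) = r := Real.sqrt_sq hr0.le
      have hsq2 : Real.sqrt (1 - r^2) = s := by
        have : 1 - r^2 = s^2 := by linarith
        rw [this, Real.sqrt_sq hs0.le]
      have habs : ‖p.1 * p.2‖ = r * s := by rw [norm_mul]
      have hrsne : ((r*s : ℝ) : ℂ) ≠ 0 := by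
        exact_mod_cast (mul_pos hr0 hs0).ne'
      have hprod : p.1 * p.2 = u * ((r * s : ℝ) : ℂ) := by
        simp only [piPlus] at hpi
        rw [habs, div_eq_iff hrsne] at hpi
        exact hpi
      have hconj : p.1 * (starRingEnd ℂ) p.1 = ((r^2 : ℝ) : ℂ) := by
        rw [Complex.mul_conj, Complex.normSq_eq_norm_sq]
      have hre : ((r:ℝ):ℂ) ≠ 0 := Complex.ofReal_ne_zero.2 hr0.ne'
      simp only [pageF, hsq, hsq2]
      refine Prod.ext ?_ ?_
      · show ((r:ℝ):ℂ) * (p.1 / ((r:ℝ):ℂ)) = p.1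
        field_simp
      · show ((s:ℝ):ℂ) * u * (starRingEnd ℂ) (p.1 / ((r:ℝ):ℂ)) = p.2
        rw [map_div₀]
        have hcr : (starRingEnd ℂ) ((r:ℝ):ℂ) = ((r:ℝ):ℂ) := Complex.conj_ofReal r
        rw [hcr]
        apply mul_left_cancel₀ h1
        calc p.1 * (((s:ℝ):ℂ) * u * ((starRingEnd ℂ) p.1 / ((r:ℝ):ℂ)))
            = (p.1 * (starRingEnd ℂ) p.1) * (((s:ℝ):ℂ) * u) / ((r:ℝ):ℂ) := by ring
          _ = ((r^2 : ℝ):ℂ) * (((s:ℝ):ℂ) * u) / ((r:ℝ):ℂ) := by rw [hconj]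
          _ = u * ((r * s : ℝ):ℂ) := by push_cast; field_simp
          _ = p.1 * p.2 := hprod.symm
  · -- Hopf link case
    have hS3' : ‖p.1‖ ^ 2 + ‖p.2‖ ^ 2 = 1 := hS3
    rcases mul_eq_zero.1 hz with h | h
    · -- p.1 = 0
      have hs : ‖p.2‖ = 1 := by
        apply sq_abs_one (norm_nonneg _)
        rw [h] at hS3'; simpa using hS3'
      refine ⟨u * (starRingEnd ℂ) p.2, 0, ?_, by norm_num, ?_⟩
      · simp [map_mul, hu, hs]
      · have : (starRingEnd ℂ) (u * (starRingEnd ℂ) p.2) = (starRingEnd ℂ) u * p.2 := by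
          simp [map_mul]
        simp only [pageF, Real.sqrt_zero, sub_zero, Real.sqrt_one, this]
        have huu : u * ((starRingEnd ℂ) u * p.2) = p.2 := by
          rw [← mul_assoc, Complex.mul_conj, Complex.normSq_eq_norm_sq, hu]
          norm_num
        refine Prod.ext ?_ ?_
        · simp [h]
        · simpa using huu
    · -- p.2 = 0
      have hr : ‖p.1‖ = 1 := by
        apply sq_abs_one (norm_nonneg _)
        rw [h] at hS3'; simpa using hS3'
      refine ⟨p.1, 1, hr, by norm_num, ?_⟩
      simp only [pageF, Real.sqrt_one, sub_self, Real.sqrt_zero]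
      refine Prod.ext ?_ ?_
      · simp
      · simp [h]

lemma pageF_inj (hu : ‖u‖ = 1) {w w' : ℂ} {t t' : ℝ}
    (ht : t ∈ Set.Icc (0:ℝ) 1) (ht' : t' ∈ Set.Icc (0:ℝ) 1)
    (hw : ‖w‖ = 1) (hw' : ‖w'‖ = 1)
    (h : pageF u w t = pageF u w' t') : w = w' ∧ t = t' := by
  have hune : u ≠ 0 := by intro hh; rw [hh] at hu; simp at hu
  have h1 : ((Real.sqrt t : ℝ) : ℂ) * w = ((Real.sqrt t' : ℝ):ℂ) * w' :=
    congrArg Prod.fst h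
  have h2 : ((Real.sqrt (1-t) : ℝ):ℂ) * u * (starRingEnd ℂ) w
      = ((Real.sqrt (1-t') : ℝ):ℂ) * u * (starRingEnd ℂ) w' := congrArg Prod.snd h
  have habs : Real.sqrt t = Real.sqrt t' := by
    have := congrArg (‖·‖) h1
    simpa [map_mul, Complex.norm_real, hw, hw',
      abs_of_nonneg (Real.sqrt_nonneg t), abs_of_nonneg (Real.sqrt_nonneg t')] using this
  have htt : t = t' := (Real.sqrt_inj ht.1 ht'.1).1 habs
  subst htt
  refine ⟨?_, rfl⟩
  rcases eq_or_ne t 0 with h0 | h0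
  · subst h0
    simp only [sub_zero, Real.sqrt_one, Complex.ofReal_one, one_mul] at h2
    have : (starRingEnd ℂ) w = (starRingEnd ℂ) w' := mul_left_cancel₀ hune h2
    exact star_injective this
  · have : ((Real.sqrt t : ℝ):ℂ) ≠ 0 := by
      exact_mod_cast (Real.sqrt_pos.2 (lt_of_le_of_ne ht.1 (Ne.symm h0))).ne'
    exact mul_left_cancel₀ this h1

end HopfAux

namespace HopfAux

lemma S1_eq : S1 = Metric.sphere (0:ℂ) 1 := by
  ext w
  simp [S1, mem_sphere_zero_iff_norm]

instance : CompactSpace ↥S1 :=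
  isCompact_iff_compactSpace.mp (S1_eq ▸ isCompact_sphere (0:ℂ) 1)

lemma cont_pageF (u w : ℂ) : Continuous (pageF u w) := by
  refine Continuous.prodMk ?_ ?_
  · exact (Complex.continuous_ofReal.comp Real.continuous_sqrt).mul continuous_const
  · exact ((Complex.continuous_ofReal.comp
      (Real.continuous_sqrt.comp (continuous_const.sub continuous_id))).mul
      continuous_const).mul continuous_const

lemma cont_Fb (u : ℂ) :
    Continuous (fun q : ↥S1 × ↥(Set.Icc (0:ℝ) 1) => pageF u q.1.val q.2.val) := by
  refine Continuous.prodMk ?_ ?_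
  · exact (Complex.continuous_ofReal.comp
      (Real.continuous_sqrt.comp (continuous_subtype_val.comp continuous_snd))).mul
      (continuous_subtype_val.comp continuous_fst)
  · exact ((Complex.continuous_ofReal.comp
      (Real.continuous_sqrt.comp
        (continuous_const.sub (continuous_subtype_val.comp continuous_snd)))).mul
      continuous_const).mul
      (Complex.continuous_conj.comp (continuous_subtype_val.comp continuous_fst))

end HopfAux

open HopfAux

/-- For each `u ∈ S¹`, the closure of the page `A_u = π₊⁻¹({u})` equals `A_u ∪ H`, and
this closure is homeomorphic to the closed annulus `S¹ × [0,1]` by a homeomorphism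
carrying `A_u` onto `S¹ × (0,1)` and `H` onto `S¹ × {0,1}`. -/
theorem open_book_positive_hopf_page_closure (u : ℂ) (hu : ‖u‖ = 1) :
    closure (pageA u) = pageA u ∪ hopfLink ∧
    ∃ h : (closure (pageA u) : Set (ℂ × ℂ)) ≃ₜ (↥S1 × ↥(Set.Icc (0:ℝ) 1)),
      (∀ p : (closure (pageA u) : Set (ℂ × ℂ)),
        (p.val ∈ pageA u ↔ ((h p).2 : ℝ) ∈ Set.Ioo (0:ℝ) 1)) ∧
      (∀ p : (closure (pageA u) : Set (ℂ × ℂ)),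
        (p.val ∈ hopfLink ↔ (((h p).2 : ℝ) = 0 ∨ ((h p).2 : ℝ) = 1))) := by
  set Fb : (↥S1 × ↥(Set.Icc (0:ℝ) 1)) → ℂ × ℂ :=
    fun q => pageF u q.1.val q.2.val with hFbdef
  have hcont : Continuous Fb := cont_Fb u
  have hinj : Function.Injective Fb := by
    rintro ⟨w, t⟩ ⟨w', t'⟩ h
    obtain ⟨hw, ht⟩ := pageF_inj hu t.2 t'.2 w.2 w'.2 h
    exact Prod.ext (Subtype.ext hw) (Subtype.ext ht)
  have hrange : Set.range Fb = pageA u ∪ hopfLink := by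
    apply Set.eq_of_subset_of_subset
    · rintro _ ⟨⟨w, t⟩, rfl⟩
      rcases eq_or_ne (t.val) 0 with h0 | h0
      · exact Or.inr ((mem_hopf_iff hu w.2 t.2).2 (Or.inl h0))
      · rcases eq_or_ne (t.val) 1 with h1 | h1
        · exact Or.inr ((mem_hopf_iff hu w.2 t.2).2 (Or.inr h1))
        · exact Or.inl ((mem_page_iff hu w.2 t.2).2
            ⟨lt_of_le_of_ne t.2.1 (Ne.symm h0), lt_of_le_of_ne t.2.2 h1⟩)
    · intro p hp
      obtain ⟨w, t, hw, ht, hft⟩ := surj hu hp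
      exact ⟨(⟨w, hw⟩, ⟨t, ht⟩), hft⟩
  have hHsub : hopfLink ⊆ closure (pageA u) := by
    intro p hp
    obtain ⟨w, t, hw, ht, hft⟩ := surj hu (Or.inr hp)
    have himg : pageF u w '' Set.Ioo 0 1 ⊆ pageA u := by
      rintro _ ⟨s, hs, rfl⟩
      exact (mem_page_iff hu hw (Set.mem_Icc_of_Ioo hs)).2 hs
    have hmem : p ∈ pageF u w '' closure (Set.Ioo (0:ℝ) 1) := by
      rw [closure_Ioo (by norm_num : (0:ℝ) ≠ 1)]
      exact ⟨t, ht, hft⟩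
    exact closure_mono himg (image_closure_subset_closure_image (cont_pageF u w) hmem)
  have hclosed : IsClosed (pageA u ∪ hopfLink) := by
    rw [← hrange]
    exact (isCompact_range hcont).isClosed
  have hclos : closure (pageA u) = pageA u ∪ hopfLink := by
    apply subset_antisymm
    · exact closure_minimal Set.subset_union_left hclosed
    · rintro p (hp | hp)
      · exact subset_closure hp
      · exact hHsub hp
  refine ⟨hclos, ?_⟩
  have hemb : Topology.IsEmbedding Fb := (hcont.isClosedEmbedding hinj).toIsEmbedding
  set e := hemb.toHomeomorph with hedef
  have hset : closure (pageA u) = Set.range Fb := by rw [hclos, hrange]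
  set h : (closure (pageA u) : Set (ℂ × ℂ)) ≃ₜ (↥S1 × ↥(Set.Icc (0:ℝ) 1)) :=
    (Homeomorph.setCongr hset).trans e.symm with hhdef
  have hkey : ∀ p : (closure (pageA u) : Set (ℂ × ℂ)), Fb (h p) = p.val := by
    intro p
    have h1 : e (e.symm (Homeomorph.setCongr hset p)) = Homeomorph.setCongr hset p :=
      e.apply_symm_apply _
    have h2 : ∀ z, (e z : ℂ × ℂ) = Fb z := fun z => rfl
    have := congrArg Subtype.val h1
    rw [h2] at this
    exact this
  refine ⟨h, ?_, ?_⟩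
  · intro p
    have := mem_page_iff (w := (h p).1.val) (t := ((h p).2 : ℝ)) hu (h p).1.2 (h p).2.2
    rw [← this]
    rw [show pageF u (h p).1.val ((h p).2 : ℝ) = Fb (h p) from rfl, hkey]
  · intro p
    have := mem_hopf_iff (w := (h p).1.val) (t := ((h p).2 : ℝ)) hu (h p).1.2 (h p).2.2
    rw [← this]
    rw [show pageF u (h p).1.val ((h p).2 : ℝ) = Fb (h p) from rfl, hkey]
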